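/- (Λ⁺ commutes with four-fold Clifford conjugation.) For every Clifford unitary C on (Fin N → Fin 2), (Cᴴ)^{⊗4} * Λ⁺ * C^{⊗4} = Λ⁺; equivalently, Λ⁺ * C^{⊗4} = C^{⊗4} * Λ⁺. -/
import Mathlib
open Matrix Kronecker
open scoped Classical
noncomputable section


/-- Single-qubit Pauli matrices. -/
def pauli : Fin 4 → Matrix (Fin 2) (Fin 2) ℂ :=
  ![1, !![0, 1; 1, 0], !![0, -Complex.I; Complex.I, 0], !![1, 0; 0, -1]]

/-- Pauli string on `N` qubits with label `a`. -/
def PauliString {N : ℕ} (a : Fin N → Fin 4) :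
    Matrix (Fin N → Fin 2) (Fin N → Fin 2) ℂ :=
  fun f g => ∏ k, pauli (a k) (f k) (g k)

/-- Reduced Choi state: partial trace over the doubled-B factor of the
normalized Choi state of `O`. -/
def rhoA {ιA ιB : Type*} [Fintype ιA] [Fintype ιB]
    (O : Matrix (ιA × ιB) (ιA × ιB) ℂ) :
    Matrix (ιA × ιA) (ιA × ιA) ℂ :=
  fun p q =>
    (1 / (Fintype.card ιA * Fintype.card ιB : ℂ)) *
      ∑ b : ιB, ∑ b' : ιB, O (p.1, b) (p.2, b') * star (O (q.1, b) (q.2, b'))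

/-- Identification of `N = N_A + N_B` qubits with the pair of subsystems. -/
def qubitEquiv (NA NB : ℕ) :
    (Fin (NA + NB) → Fin 2) ≃ (Fin NA → Fin 2) × (Fin NB → Fin 2) :=
  (Equiv.arrowCongr finSumFinEquiv.symm (Equiv.refl (Fin 2))).trans
    (Equiv.sumArrowEquivProdArrow _ _ _)

/-- Reduced Choi state of an `N = N_A + N_B` qubit operator, subsystem A
being the first `N_A` qubits. -/
def rhoAq (NA NB : ℕ)
    (O : Matrix (Fin (NA + NB) → Fin 2) (Fin (NA + NB) → Fin 2) ℂ) :
    Matrix ((Fin NA → Fin 2) × (Fin NA → Fin 2))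
      ((Fin NA → Fin 2) × (Fin NA → Fin 2)) ℂ :=
  rhoA (Matrix.reindex (qubitEquiv NA NB) (qubitEquiv NA NB) O)

/-- `n`-fold replica (tensor power) of a matrix. -/
def replica {ι : Type*} (n : ℕ) (O : Matrix ι ι ℂ) :
    Matrix (Fin n → ι) (Fin n → ι) ℂ :=
  fun f g => ∏ a, O (f a) (g a)

/-- Replica permutation operator. -/
def Tperm {ι : Type*} [DecidableEq ι] {n : ℕ} (π : Equiv.Perm (Fin n)) :
    Matrix (Fin n → ι) (Fin n → ι) ℂ :=
  fun f g => if f = g ∘ π then 1 else 0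

/-- Number of cycles of a permutation, counting fixed points as 1-cycles. -/
def numCycles {n : ℕ} (π : Equiv.Perm (Fin n)) : ℕ :=
  Multiset.card π.cycleType + (Finset.univ.filter fun x => π x = x).card

/-- `δ(π) = 0` if `π` has no fixed points and all cycles of even length,
else `δ(π) = 1`. -/
def deltaOdd {n : ℕ} (π : Equiv.Perm (Fin n)) : ℕ :=
  if (∀ x, π x ≠ x) ∧ (∀ c ∈ π.cycleType, Even c) then 0 else 1

/-- Projector onto four-fold replicated Pauli strings. -/
def LambdaPlus (N : ℕ) :
    Matrix (Fin 4 → (Fin N → Fin 2)) (Fin 4 → (Fin N → Fin 2)) ℂ :=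
  (1 / (4 ^ N : ℂ)) • ∑ a : Fin N → Fin 4, replica 4 (PauliString a)

def permA : Equiv.Perm (Fin 4) := Equiv.swap 0 1 * Equiv.swap 2 3
def permB : Equiv.Perm (Fin 4) := Equiv.swap 0 3 * Equiv.swap 1 2

/-- The purity contraction permutation operator `T'` on four replicas of a
bipartite system. -/
def Tprime {ιA ιB : Type*} [DecidableEq ιA] [DecidableEq ιB] :
    Matrix (Fin 4 → ιA × ιB) (Fin 4 → ιA × ιB) ℂ :=
  fun f g =>
    if (∀ a, (f a).1 = (g (permA a)).1 ∧ (f a).2 = (g (permB a)).2) then 1 else 0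

/-- The unitary stabilizer group of `U` (as a finite set of pairs of Pauli
labels). -/
def Stab {N : ℕ} (U : Matrix (Fin N → Fin 2) (Fin N → Fin 2) ℂ) :
    Finset ((Fin N → Fin 4) × (Fin N → Fin 4)) :=
  Finset.univ.filter fun p =>
    Matrix.trace (PauliString p.1 * Uᴴ * PauliString p.2 * U) / (2 ^ N : ℂ)
      ∈ ({1, -1} : Set ℂ)




lemma replica_mul {ι : Type*} [Fintype ι] [DecidableEq ι] (n : ℕ) (A B : Matrix ι ι ℂ) :
    replica n A * replica n B = replica n (A * B) := by
  ext f g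
  simp only [replica, Matrix.mul_apply, ← Finset.prod_mul_distrib]
  rw [Finset.prod_univ_sum (fun _ => Finset.univ)
    (fun a x => A (f a) x * B x (g a)), Fintype.piFinset_univ]

lemma replica_one {ι : Type*} [Fintype ι] [DecidableEq ι] (n : ℕ) :
    replica n (1 : Matrix ι ι ℂ) = 1 := by
  ext f g
  by_cases h : f = g
  · subst h; simp [replica, Matrix.one_apply]
  · obtain ⟨a, ha⟩ := Function.ne_iff.mp h
    simp only [replica, Matrix.one_apply, if_neg h]
    exact Finset.prod_eq_zero (Finset.mem_univ a) (if_neg ha)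

lemma replica_smul {ι : Type*} [Fintype ι] (n : ℕ) (c : ℂ) (A : Matrix ι ι ℂ) :
    replica n (c • A) = c ^ n • replica n A := by
  ext f g
  simp [replica, Finset.prod_mul_distrib]

def pip (i j : Fin 4) : ℂ := ∑ x : Fin 2, ∑ y : Fin 2, pauli i x y * pauli j x y

lemma pip_off {i j : Fin 4} (h : i ≠ j) : pip i j = 0 := by
  fin_cases i <;> fin_cases j <;>
    simp_all [pip, pauli, Fin.sum_univ_two, Matrix.one_apply]

lemma pip_diag (i : Fin 4) : pip i i ≠ 0 := by
  fin_cases i <;>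
    simp [pip, pauli, Fin.sum_univ_two, Matrix.one_apply, Complex.I_mul_I]

lemma pair_sum {N : ℕ} (a a' : Fin N → Fin 4) :
    (∑ f : Fin N → Fin 2, ∑ g : Fin N → Fin 2,
      PauliString a f g * PauliString a' f g) = ∏ k, pip (a k) (a' k) := by
  simp only [PauliString, ← Finset.prod_mul_distrib]
  have h1 : ∀ f : Fin N → Fin 2,
      (∑ g : Fin N → Fin 2, ∏ k, pauli (a k) (f k) (g k) * pauli (a' k) (f k) (g k))
        = ∏ k, ∑ y : Fin 2, pauli (a k) (f k) y * pauli (a' k) (f k) y := by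
    intro f
    rw [Finset.prod_univ_sum (fun _ => Finset.univ), Fintype.piFinset_univ]
  simp only [h1]
  have h2 := Finset.prod_univ_sum (fun _ : Fin N => (Finset.univ : Finset (Fin 2)))
    (fun k x => ∑ y : Fin 2, pauli (a k) x y * pauli (a' k) x y)
  simp only [pip]
  rw [h2, Fintype.piFinset_univ]


/-- `Λ⁺` commutes with four-fold Clifford conjugation. -/
theorem lambdaPlus_clifford_invariant (N : ℕ)
    (C : Matrix (Fin N → Fin 2) (Fin N → Fin 2) ℂ)
    (hC : C ∈ Matrix.unitaryGroup (Fin N → Fin 2) ℂ)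
    (hCliff : ∀ a : Fin N → Fin 4, ∃ b : Fin N → Fin 4,
      ∃ c ∈ ({1, -1, Complex.I, -Complex.I} : Set ℂ),
        Cᴴ * PauliString a * C = c • PauliString b) :
    replica 4 Cᴴ * LambdaPlus N * replica 4 C = LambdaPlus N ∧
    LambdaPlus N * replica 4 C = replica 4 C * LambdaPlus N := by
  choose b c hc hEq using hCliff
  have h1 : C * Cᴴ = 1 := by
    simpa [Matrix.star_eq_conjTranspose] using (Matrix.mem_unitaryGroup_iff).mp hC
  have hc' : ∀ a, c a = 1 ∨ c a = -1 ∨ c a = Complex.I ∨ c a = -Complex.I := by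
    intro a
    simpa [Set.mem_insert_iff, Set.mem_singleton_iff] using hc a
  have hc0 : ∀ a, c a ≠ 0 := by
    intro a
    rcases hc' a with h | h | h | h <;> simp [h, Complex.I_ne_zero]
  have hc4 : ∀ a, c a ^ 4 = 1 := by
    intro a
    rcases hc' a with h | h | h | h <;>
      rw [h] <;> norm_num [show (-Complex.I) ^ 4 = Complex.I ^ 4 by ring, Complex.I_pow_four]
  have conj : ∀ M : Matrix (Fin N → Fin 2) (Fin N → Fin 2) ℂ,
      C * (Cᴴ * M * C) * Cᴴ = M := by
    intro M
    calc C * (Cᴴ * M * C) * Cᴴ = (C * Cᴴ) * M * (C * Cᴴ) := by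
          simp only [Matrix.mul_assoc]
      _ = M := by rw [h1, Matrix.one_mul, Matrix.mul_one]
  have hPrep : ∀ a, PauliString a = c a • (C * PauliString (b a) * Cᴴ) := by
    intro a
    rw [← conj (PauliString a), hEq a, Matrix.mul_smul, Matrix.smul_mul]
  have hinj : Function.Injective b := by
    intro a a' hbb
    by_contra hne
    obtain ⟨k, hk⟩ := Function.ne_iff.mp hne
    have hrel : c a' • PauliString a = c a • PauliString a' := by
      rw [hPrep a, hPrep a', hbb, smul_smul, smul_smul, mul_comm]
    have hent : ∀ f g, c a' * PauliString a f g = c a * PauliString a' f g := by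
      intro f g
      simpa using congrFun (congrFun hrel f) g
    have e1 : c a' * ∏ k, pip (a k) (a k) = c a * ∏ k, pip (a' k) (a k) := by
      rw [← pair_sum, ← pair_sum, Finset.mul_sum, Finset.mul_sum]
      refine Finset.sum_congr rfl fun f _ => ?_
      rw [Finset.mul_sum, Finset.mul_sum]
      refine Finset.sum_congr rfl fun g _ => ?_
      rw [← mul_assoc, ← mul_assoc, hent]
    have e2 : c a * ∏ k, pip (a' k) (a k) = 0 := by
      rw [Finset.prod_eq_zero (Finset.mem_univ k) (pip_off (Ne.symm hk)), mul_zero]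
    have hprod : (∏ k, pip (a k) (a k)) ≠ 0 :=
      Finset.prod_ne_zero_iff.mpr fun k _ => pip_diag (a k)
    exact mul_ne_zero (hc0 a') hprod (e1.trans e2)
  have hbij : Function.Bijective b := Finite.injective_iff_bijective.mp hinj
  have key : ∀ a, replica 4 Cᴴ * replica 4 (PauliString a) * replica 4 C
      = replica 4 (PauliString (b a)) := by
    intro a
    rw [replica_mul, replica_mul, hEq a, replica_smul, hc4 a, one_smul]
  have main1 : replica 4 Cᴴ * LambdaPlus N * replica 4 C = LambdaPlus N := by
    unfold LambdaPlus
    rw [Matrix.mul_smul, Matrix.smul_mul, Matrix.mul_sum, Matrix.sum_mul]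
    congr 1
    rw [← hbij.sum_comp (fun x => replica 4 (PauliString x))]
    exact Finset.sum_congr rfl fun a _ => key a
  refine ⟨main1, ?_⟩
  have hone : replica 4 C * replica 4 Cᴴ = 1 := by
    rw [replica_mul, h1, replica_one]
  calc LambdaPlus N * replica 4 C
      = (replica 4 C * replica 4 Cᴴ) * (LambdaPlus N * replica 4 C) := by
        rw [hone, Matrix.one_mul]
    _ = replica 4 C * (replica 4 Cᴴ * LambdaPlus N * replica 4 C) := by
        simp only [Matrix.mul_assoc]
    _ = replica 4 C * LambdaPlus N := by rw [main1]

end
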